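/- (Shuffle product identity.) Let d ≥ 1 and let X : [0,1] → ℝ^d be a continuously differentiable path. Let I = (i₁,…,i_p) and J = (j₁,…,j_q) be multi-indices with entries in {1,…,d}. For each subset A ⊆ {1,…,p+q} with |A| = p, let w_A be the multi-index of length p+q whose entries at the positions of A, read in increasing order, are i₁,…,i_p, and whose entries at the positions of the complement of A, read in increasing order, are j₁,…,j_q. Then S^{(I)}(X) · S^{(J)}(X) = Σ_{A ⊆ {1,…,p+q}, |A| = p} S^{(w_A)}(X). -/

import Mathlib

open MeasureTheory

/-- The open ordered simplex `{ t : Fin n → ℝ | a < t 0 < t 1 < ⋯ < t (n-1) < b }`. -/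
def orderedSimplex (a b : ℝ) (n : ℕ) : Set (Fin n → ℝ) :=
  {t | (∀ i, a < t i ∧ t i < b) ∧ ∀ i j : Fin n, i < j → t i < t j}

/-- The iterated integral `S^{(i₁⋯iₙ)}_{[a,b]}(X)` of a path `X : ℝ → ℝ^d`.
For `n = 0` this is automatically `1`. -/
noncomputable def sig {d : ℕ} (X : ℝ → Fin d → ℝ) (a b : ℝ) {n : ℕ}
    (idx : Fin n → Fin d) : ℝ :=
  ∫ t in orderedSimplex a b n, ∏ i, deriv (fun u => X u (idx i)) (t i)

/-- The interleaving `w_A` of the multi-indices `I` (length `p`) and `J` (length `q`)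
determined by a subset `A ⊆ {1,…,p+q}` of cardinality `p`: the entries at the
positions of `A`, read in increasing order, are those of `I`, and the entries at the
positions of the complement of `A`, read in increasing order, are those of `J`. -/
def interleave {d p q : ℕ} (I : Fin p → Fin d) (J : Fin q → Fin d)
    (A : Finset (Fin (p + q))) (hA : A.card = p) : Fin (p + q) → Fin d :=
  fun m =>
    if hm : m ∈ A then
      I ⟨(A.filter (fun x => x < m)).card, by
        have h2 : (A.filter (fun x => x < m)).card < A.card :=
          Finset.card_lt_card ⟨Finset.filter_subset _ _,
            fun hsub => by simpa using hsub hm⟩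
        omega⟩
    else
      J ⟨(Aᶜ.filter (fun x => x < m)).card, by
        have hAc : Aᶜ.card = q := by
          have h1 := Finset.card_compl A
          simp only [Fintype.card_fin, hA] at h1
          omega
        have h2 : (Aᶜ.filter (fun x => x < m)).card < Aᶜ.card :=
          Finset.card_lt_card ⟨Finset.filter_subset _ _,
            fun hsub => by simpa using hsub (Finset.mem_compl.mpr hm)⟩
        omega⟩


section Aux

lemma orderedSimplex_isOpen (a b : ℝ) (n : ℕ) : IsOpen (orderedSimplex a b n) := by
  have h1 : orderedSimplex a b n =
      (⋂ i, {t : Fin n → ℝ | a < t i} ∩ {t | t i < b}) ∩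
      ⋂ i, ⋂ j, ⋂ (_ : i < j), {t : Fin n → ℝ | t i < t j} := by
    ext t
    simp [orderedSimplex, Set.mem_iInter, forall_and]
  rw [h1]
  refine IsOpen.inter (isOpen_iInter_of_finite fun i => ?_)
    (isOpen_iInter_of_finite fun i => isOpen_iInter_of_finite fun j =>
      isOpen_iInter_of_finite fun _ => ?_)
  · exact (isOpen_lt continuous_const (continuous_apply i)).inter
      (isOpen_lt (continuous_apply i) continuous_const)
  · exact isOpen_lt (continuous_apply i) (continuous_apply j)

lemma orderedSimplex_subset_Icc (n : ℕ) :
    orderedSimplex 0 1 n ⊆ Set.Icc (0 : Fin n → ℝ) 1 := by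
  intro t ht
  constructor <;> intro i
  · exact (ht.1 i).1.le
  · exact (ht.1 i).2.le

lemma card_filter_lt_orderEmbOfFin {n p : ℕ} (A : Finset (Fin n)) (hA : A.card = p) (i : Fin p) :
    (A.filter (fun x => x < A.orderEmbOfFin hA i)).card = i := by
  have himg : A.filter (fun x => x < A.orderEmbOfFin hA i) =
      (Finset.univ.filter (fun j : Fin p => j < i)).image (A.orderEmbOfFin hA) := by
    ext x
    simp only [Finset.mem_filter, Finset.mem_image, Finset.mem_univ, true_and]
    constructor
    · rintro ⟨hxA, hlt⟩
      have hx2 : x ∈ Set.range (A.orderEmbOfFin hA) := by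
        rw [Finset.range_orderEmbOfFin]; exact hxA
      obtain ⟨j, hj⟩ := hx2
      exact ⟨j, (A.orderEmbOfFin hA).strictMono.lt_iff_lt.mp (hj ▸ hlt), hj⟩
    · rintro ⟨j, hji, rfl⟩
      exact ⟨A.orderEmbOfFin_mem hA j, (A.orderEmbOfFin hA).strictMono hji⟩
  rw [himg, Finset.card_image_of_injective _ (A.orderEmbOfFin hA).injective]
  have huniv : Finset.univ.filter (fun j : Fin p => j < i) = Finset.Iio i := by
    ext j; simp
  rw [huniv, Fin.card_Iio]

variable {p q : ℕ}

lemma card_compl_eq {p q : ℕ} (A : Finset (Fin (p + q))) (hA : A.card = p) : Aᶜ.card = q := by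
  have h1 := Finset.card_compl A
  simp only [Fintype.card_fin, hA] at h1
  omega

/-- The splitting map `t ↦ (t ∘ σ_A, t ∘ τ_A)`. -/
noncomputable def psi (A : Finset (Fin (p + q))) (hA : A.card = p) :
    (Fin (p + q) → ℝ) → (Fin p → ℝ) × (Fin q → ℝ) :=
  fun t => (fun i => t (A.orderEmbOfFin hA i),
            fun j => t (Aᶜ.orderEmbOfFin (card_compl_eq A hA) j))

/-- `psi` as a measurable equivalence. -/
noncomputable def psiEquiv (A : Finset (Fin (p + q))) (hA : A.card = p) :
    (Fin (p + q) → ℝ) ≃ᵐ (Fin p → ℝ) × (Fin q → ℝ) :=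
  (MeasurableEquiv.piEquivPiSubtypeProd (fun _ : Fin (p + q) => ℝ) (fun m => m ∈ A)).trans
    (MeasurableEquiv.prodCongr
      ((MeasurableEquiv.piCongrLeft (fun _ => ℝ) (A.orderIsoOfFin hA).toEquiv).symm)
      ((MeasurableEquiv.piCongrLeft (fun _ => ℝ)
        ((Aᶜ.orderIsoOfFin (card_compl_eq A hA)).toEquiv.trans
          (Equiv.subtypeEquivRight (fun m => Finset.mem_compl)))).symm))

lemma psiEquiv_coe (A : Finset (Fin (p + q))) (hA : A.card = p) :
    ⇑(psiEquiv A hA) = psi A hA := by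
  funext t
  simp only [psiEquiv, psi, MeasurableEquiv.trans_apply, MeasurableEquiv.prodCongr,
    MeasurableEquiv.piEquivPiSubtypeProd, MeasurableEquiv.piCongrLeft, MeasurableEquiv.symm,
    MeasurableEquiv.coe_mk, Equiv.prodCongr_apply, Equiv.piEquivPiSubtypeProd,
    Equiv.coe_fn_mk, Prod.map]
  constructor <;> funext i <;>
    first
      | rfl
      | (rw [Equiv.piCongrLeft_symm_apply]; rfl)
      | rw [Equiv.piCongrLeft_symm_apply]

lemma psi_measurePreserving (A : Finset (Fin (p + q))) (hA : A.card = p) :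
    MeasurePreserving (psi A hA) volume volume := by
  rw [← psiEquiv_coe]
  have h1 := measurePreserving_piEquivPiSubtypeProd (fun _ : Fin (p + q) => (volume : Measure ℝ))
    (fun m => m ∈ A)
  have h2 := (measurePreserving_piCongrLeft (fun _ : {x // x ∈ A} => (volume : Measure ℝ))
    (A.orderIsoOfFin hA).toEquiv).symm _
  have h3 := (measurePreserving_piCongrLeft
    (fun _ : {x : Fin (p+q) // ¬ x ∈ A} => (volume : Measure ℝ))
    ((Aᶜ.orderIsoOfFin (card_compl_eq A hA)).toEquiv.trans
      (Equiv.subtypeEquivRight (fun m => Finset.mem_compl)))).symm _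
  have h23 := h2.prod h3
  rw [Measure.volume_eq_prod]
  have hco : ⇑(psiEquiv A hA) = (Prod.map _ _) ∘
      ⇑(MeasurableEquiv.piEquivPiSubtypeProd (fun _ : Fin (p + q) => ℝ) (fun m => m ∈ A)) :=
    rfl
  rw [hco]
  refine (h23.comp ?_)
  convert h1 using 3 <;> rfl

lemma strictMono_of_mem_orderedSimplex {n : ℕ} {t : Fin n → ℝ}
    (ht : t ∈ orderedSimplex 0 1 n) : StrictMono t := fun i j h => ht.2 i j h

lemma psi_image_subset (A : Finset (Fin (p + q))) (hA : A.card = p) :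
    psi A hA '' orderedSimplex 0 1 (p + q) ⊆
      orderedSimplex 0 1 p ×ˢ orderedSimplex 0 1 q := by
  rintro z ⟨t, ht, rfl⟩
  have hst := strictMono_of_mem_orderedSimplex ht
  constructor
  · exact ⟨fun i => ht.1 _, fun i j h => hst ((A.orderEmbOfFin hA).strictMono h)⟩
  · exact ⟨fun i => ht.1 _, fun i j h =>
      hst ((Aᶜ.orderEmbOfFin (card_compl_eq A hA)).strictMono h)⟩

lemma range_fst_of_psi {A : Finset (Fin (p + q))} {hA : A.card = p} {t : Fin (p + q) → ℝ}
    (ht : t ∈ orderedSimplex 0 1 (p + q)) {m : Fin (p + q)} :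
    m ∈ A ↔ t m ∈ Set.range (psi A hA t).1 := by
  have hst := strictMono_of_mem_orderedSimplex ht
  constructor
  · intro hm
    have : m ∈ Set.range (A.orderEmbOfFin hA) := by rw [Finset.range_orderEmbOfFin]; exact hm
    obtain ⟨i, rfl⟩ := this
    exact ⟨i, rfl⟩
  · rintro ⟨i, hi⟩
    have : A.orderEmbOfFin hA i = m := hst.injective hi
    rw [← this]; exact A.orderEmbOfFin_mem hA i

lemma range_union_of_psi {A : Finset (Fin (p + q))} {hA : A.card = p} {t : Fin (p + q) → ℝ}
    (ht : t ∈ orderedSimplex 0 1 (p + q)) :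
    Set.range t = Set.range (psi A hA t).1 ∪ Set.range (psi A hA t).2 := by
  ext x
  constructor
  · rintro ⟨m, rfl⟩
    by_cases hm : m ∈ A
    · left; exact ((range_fst_of_psi (hA := hA) ht).mp hm)
    · right
      have : m ∈ Set.range (Aᶜ.orderEmbOfFin (card_compl_eq A hA)) := by
        rw [Finset.range_orderEmbOfFin]; exact Finset.mem_compl.mpr hm
      obtain ⟨j, rfl⟩ := this
      exact ⟨j, rfl⟩
  · rintro (⟨i, rfl⟩ | ⟨j, rfl⟩)
    · exact ⟨_, rfl⟩
    · exact ⟨_, rfl⟩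

lemma psi_image_disjoint {A B : Finset (Fin (p + q))} {hA : A.card = p} {hB : B.card = p}
    (hne : A ≠ B) :
    Disjoint (psi A hA '' orderedSimplex 0 1 (p + q))
      (psi B hB '' orderedSimplex 0 1 (p + q)) := by
  rw [Set.disjoint_left]
  rintro z ⟨t, ht, rfl⟩ ⟨t', ht', hz⟩
  have hst := strictMono_of_mem_orderedSimplex ht
  have hst' := strictMono_of_mem_orderedSimplex ht'
  have hrange : Set.range t = Set.range t' := by
    rw [range_union_of_psi (hA := hA) ht, range_union_of_psi (hA := hB) ht', hz]
  have htt : t = t' := by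
    have hri := @StrictMono.range_inj (Fin (p+q)) ℝ inferInstance inferInstance
      (inferInstance : WellFoundedLT (Fin (p+q))) t t' hst hst'
    exact hri.mp hrange
  subst htt
  apply hne
  ext m
  rw [range_fst_of_psi (hA := hA) ht, range_fst_of_psi (hA := hB) ht', hz]

lemma psi_cover {z : (Fin p → ℝ) × (Fin q → ℝ)}
    (hz : z ∈ orderedSimplex 0 1 p ×ˢ orderedSimplex 0 1 q)
    (hsep : ∀ i j, z.1 i ≠ z.2 j) :
    ∃ (A : Finset (Fin (p + q))) (hA : A.card = p),
      z ∈ psi A hA '' orderedSimplex 0 1 (p + q) := by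
  obtain ⟨s, u⟩ := z
  obtain ⟨hs, hu⟩ := hz
  have hsm : StrictMono s := strictMono_of_mem_orderedSimplex hs
  have hum : StrictMono u := strictMono_of_mem_orderedSimplex hu
  set w : Fin (p + q) → ℝ := fun m => Sum.elim s u (finSumFinEquiv.symm m) with hw
  have hwinj : Function.Injective w := by
    have he : Function.Injective (Sum.elim s u) := by
      rintro (i | i) (j | j) h
      · rw [hsm.injective h]
      · exact absurd h (hsep i j)
      · exact absurd h.symm (hsep j i)
      · rw [hum.injective h]
    exact he.comp finSumFinEquiv.symm.injective
  set σ := Tuple.sort w with hσ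
  set t := w ∘ σ with htdef
  have htmono : Monotone t := Tuple.monotone_sort w
  have htstrict : StrictMono t :=
    htmono.strictMono_of_injective (hwinj.comp σ.injective)
  have htmem : t ∈ orderedSimplex 0 1 (p + q) := by
    refine ⟨fun m => ?_, fun i j h => htstrict h⟩
    show 0 < w (σ m) ∧ w (σ m) < 1
    rw [hw]
    rcases hsum : finSumFinEquiv.symm (σ m) with i | j
    · simp only [hsum, Sum.elim_inl]
      exact ⟨(hs.1 i).1, (hs.1 i).2⟩
    · simp only [hsum, Sum.elim_inr]
      exact ⟨(hu.1 j).1, (hu.1 j).2⟩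
  set g : Fin p → Fin (p + q) := fun i => σ.symm (finSumFinEquiv (Sum.inl i)) with hg
  set g' : Fin q → Fin (p + q) := fun j => σ.symm (finSumFinEquiv (Sum.inr j)) with hg'
  have htg : ∀ i, t (g i) = s i := fun i => by
    simp [htdef, hg, hw]
  have htg' : ∀ j, t (g' j) = u j := fun j => by
    simp [htdef, hg', hw]
  have hgmono : StrictMono g := fun i j h => by
    have : t (g i) < t (g j) := by rw [htg, htg]; exact hsm h
    exact htstrict.lt_iff_lt.mp this
  have hg'mono : StrictMono g' := fun i j h => by
    have : t (g' i) < t (g' j) := by rw [htg', htg']; exact hum h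
    exact htstrict.lt_iff_lt.mp this
  set A : Finset (Fin (p + q)) := Finset.image g Finset.univ with hAdef
  have hginj : Function.Injective g := hgmono.injective
  have hA : A.card = p := by
    rw [hAdef, Finset.card_image_of_injective _ hginj, Finset.card_univ, Fintype.card_fin]
  have hgA : ∀ i, g i ∈ A := fun i => Finset.mem_image_of_mem g (Finset.mem_univ i)
  have hgemb : A.orderEmbOfFin hA = g := (Finset.orderEmbOfFin_unique hA hgA hgmono).symm
  have hg'Ac : ∀ j, g' j ∈ Aᶜ := by
    intro j
    rw [Finset.mem_compl, hAdef]
    simp only [Finset.mem_image, Finset.mem_univ, true_and, not_exists]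
    intro i hij
    have := σ.symm.injective hij
    have := finSumFinEquiv.injective this
    exact (Sum.inl_ne_inr this)
  have hg'emb : Aᶜ.orderEmbOfFin (card_compl_eq A hA) = g' :=
    (Finset.orderEmbOfFin_unique (card_compl_eq A hA) hg'Ac hg'mono).symm
  refine ⟨A, hA, t, htmem, ?_⟩
  unfold psi
  rw [hgemb, hg'emb]
  exact Prod.ext (funext htg) (funext htg')

lemma null_diag : (volume : Measure ((Fin p → ℝ) × (Fin q → ℝ)))
    {z | ∃ i j, z.1 i = z.2 j} = 0 := by
  have : {z : (Fin p → ℝ) × (Fin q → ℝ) | ∃ i j, z.1 i = z.2 j} =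
      ⋃ i, ⋃ j, {z : (Fin p → ℝ) × (Fin q → ℝ) | z.1 i = z.2 j} := by
    ext z; simp [Set.mem_iUnion]
  rw [this]
  refine measure_iUnion_null fun i => measure_iUnion_null fun j => ?_
  rw [Measure.volume_eq_prod]
  have hH : MeasurableSet {z : (Fin p → ℝ) × (Fin q → ℝ) | z.1 i = z.2 j} :=
    measurableSet_eq_fun (show Measurable fun z : (Fin p → ℝ) × (Fin q → ℝ) => z.1 i from
      (measurable_pi_apply i).comp measurable_fst)
      (show Measurable fun z : (Fin p → ℝ) × (Fin q → ℝ) => z.2 j from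
      (measurable_pi_apply j).comp measurable_snd)
  rw [Measure.prod_apply hH]
  have : ∀ x : Fin p → ℝ, (volume : Measure (Fin q → ℝ))
      (Prod.mk x ⁻¹' {z : (Fin p → ℝ) × (Fin q → ℝ) | z.1 i = z.2 j}) = 0 := by
    intro x
    have heq : Prod.mk x ⁻¹' {z : (Fin p → ℝ) × (Fin q → ℝ) | z.1 i = z.2 j} =
        {u : Fin q → ℝ | u j = x i} := by
      ext u; simp [eq_comm]
    rw [heq, volume_pi]
    exact Measure.pi_hyperplane (fun _ : Fin q => (volume : Measure ℝ)) j (x i)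
  simp only [this]
  simp


lemma interleave_orderEmbOfFin {d : ℕ} (I : Fin p → Fin d) (J : Fin q → Fin d)
    (A : Finset (Fin (p + q))) (hA : A.card = p) (i : Fin p) :
    interleave I J A hA (A.orderEmbOfFin hA i) = I i := by
  have hm : A.orderEmbOfFin hA i ∈ A := A.orderEmbOfFin_mem hA i
  simp only [interleave, dif_pos hm]
  congr 1
  exact Fin.ext (card_filter_lt_orderEmbOfFin A hA i)

lemma interleave_orderEmbOfFin_compl {d : ℕ} (I : Fin p → Fin d) (J : Fin q → Fin d)
    (A : Finset (Fin (p + q))) (hA : A.card = p) (j : Fin q) :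
    interleave I J A hA (Aᶜ.orderEmbOfFin (card_compl_eq A hA) j) = J j := by
  have hm : Aᶜ.orderEmbOfFin (card_compl_eq A hA) j ∈ Aᶜ :=
    Aᶜ.orderEmbOfFin_mem (card_compl_eq A hA) j
  have hm' : ¬ Aᶜ.orderEmbOfFin (card_compl_eq A hA) j ∈ A := Finset.mem_compl.mp hm
  simp only [interleave, dif_neg hm']
  congr 1
  exact Fin.ext (card_filter_lt_orderEmbOfFin Aᶜ (card_compl_eq A hA) j)

lemma image_orderEmbOfFin {n k : ℕ} (A : Finset (Fin n)) (h : A.card = k) :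
    Finset.image (A.orderEmbOfFin h) Finset.univ = A := by
  ext m
  simp only [Finset.mem_image, Finset.mem_univ, true_and]
  constructor
  · rintro ⟨i, rfl⟩; exact A.orderEmbOfFin_mem h i
  · intro hm
    have : m ∈ Set.range (A.orderEmbOfFin h) := by rw [Finset.range_orderEmbOfFin]; exact hm
    exact this

lemma prod_split {d : ℕ} (X : ℝ → Fin d → ℝ) (I : Fin p → Fin d) (J : Fin q → Fin d)
    (A : Finset (Fin (p + q))) (hA : A.card = p) (t : Fin (p + q) → ℝ) :
    (∏ i, deriv (fun u => X u (I i)) ((psi A hA t).1 i)) *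
      (∏ j, deriv (fun u => X u (J j)) ((psi A hA t).2 j)) =
    ∏ m, deriv (fun u => X u (interleave I J A hA m)) (t m) := by
  rw [← Finset.prod_mul_prod_compl A
    (fun m => deriv (fun u => X u (interleave I J A hA m)) (t m))]
  congr 1
  · refine Finset.prod_bij (fun (i : Fin p) _ => A.orderEmbOfFin hA i)
      (fun i _ => A.orderEmbOfFin_mem hA i)
      (fun a _ b _ h => (A.orderEmbOfFin hA).injective h)
      (fun m hm => ?_) (fun i _ => ?_)
    · have hmr : m ∈ Set.range (A.orderEmbOfFin hA) := by
        rw [Finset.range_orderEmbOfFin]; exact hm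
      obtain ⟨i, rfl⟩ := hmr
      exact ⟨i, Finset.mem_univ i, rfl⟩
    · rw [interleave_orderEmbOfFin]
      rfl
  · refine Finset.prod_bij (fun (j : Fin q) _ => Aᶜ.orderEmbOfFin (card_compl_eq A hA) j)
      (fun j _ => Aᶜ.orderEmbOfFin_mem (card_compl_eq A hA) j)
      (fun a _ b _ h => (Aᶜ.orderEmbOfFin (card_compl_eq A hA)).injective h)
      (fun m hm => ?_) (fun j _ => ?_)
    · have hmr : m ∈ Set.range (Aᶜ.orderEmbOfFin (card_compl_eq A hA)) := by
        rw [Finset.range_orderEmbOfFin]; exact hm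
      obtain ⟨j, rfl⟩ := hmr
      exact ⟨j, Finset.mem_univ j, rfl⟩
    · rw [interleave_orderEmbOfFin_compl]
      rfl


lemma psi_measurableEmbedding (A : Finset (Fin (p + q))) (hA : A.card = p) :
    MeasurableEmbedding (psi A hA) := by
  rw [← psiEquiv_coe]; exact (psiEquiv A hA).measurableEmbedding

lemma cont_deriv {d : ℕ} (X : ℝ → Fin d → ℝ) (hX : ContDiff ℝ 1 X) (c : Fin d) :
    Continuous (deriv fun u => X u c) := by
  have h : ContDiff ℝ 1 (fun u => X u c) :=
    (ContinuousLinearMap.proj (R := ℝ) (φ := fun _ : Fin d => ℝ) c).contDiff.comp hX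
  exact h.continuous_deriv le_rfl


end Aux

/-- shuffle product identity:
`S^{(I)}(X) · S^{(J)}(X) = Σ_{A ⊆ {1,…,p+q}, |A| = p} S^{(w_A)}(X)`. -/
theorem stmt_2 {d p q : ℕ} (hd : 1 ≤ d) (X : ℝ → Fin d → ℝ) (hX : ContDiff ℝ 1 X)
    (I : Fin p → Fin d) (J : Fin q → Fin d) :
    sig X 0 1 I * sig X 0 1 J =
      ∑ A : {A : Finset (Fin (p + q)) // A.card = p},
        sig X 0 1 (interleave I J A.1 A.2) := by
  classical
  set S := orderedSimplex 0 1 (p + q) with hS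
  set Sp := orderedSimplex 0 1 p with hSp
  set Sq := orderedSimplex 0 1 q with hSq
  set F : (Fin p → ℝ) × (Fin q → ℝ) → ℝ := fun z =>
    (∏ i, deriv (fun u => X u (I i)) (z.1 i)) *
      (∏ j, deriv (fun u => X u (J j)) (z.2 j)) with hF
  have hFc : Continuous F := by
    apply Continuous.mul
    · apply continuous_finset_prod
      intro i _
      exact (cont_deriv X hX (I i)).comp ((continuous_apply i).comp continuous_fst)
    · apply continuous_finset_prod
      intro j _
      exact (cont_deriv X hX (J j)).comp ((continuous_apply j).comp continuous_snd)
  have hFint : IntegrableOn F (Sp ×ˢ Sq) volume := by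
    have hcpt : IsCompact ((Set.Icc (0 : Fin p → ℝ) 1) ×ˢ (Set.Icc (0 : Fin q → ℝ) 1)) :=
      isCompact_Icc.prod isCompact_Icc
    exact (hFc.continuousOn.integrableOn_compact hcpt).mono_set
      (Set.prod_mono (orderedSimplex_subset_Icc p) (orderedSimplex_subset_Icc q))
  set U : Set ((Fin p → ℝ) × (Fin q → ℝ)) :=
    ⋃ A : {A : Finset (Fin (p + q)) // A.card = p}, psi A.1 A.2 '' S with hU
  have hUsub : U ⊆ Sp ×ˢ Sq :=
    Set.iUnion_subset fun A => psi_image_subset A.1 A.2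
  have hdiff : (Sp ×ˢ Sq) \ U ⊆ {z | ∃ i j, z.1 i = z.2 j} := by
    rintro z ⟨hzm, hzU⟩
    by_contra hcon
    simp only [Set.mem_setOf_eq, not_exists] at hcon
    obtain ⟨A, hA, hmem⟩ := psi_cover hzm hcon
    exact hzU (Set.mem_iUnion.mpr ⟨⟨A, hA⟩, hmem⟩)
  have haeeq : (Sp ×ˢ Sq : Set ((Fin p → ℝ) × (Fin q → ℝ))) =ᵐ[volume] U := by
    rw [ae_eq_set]
    constructor
    · exact measure_mono_null hdiff null_diag
    · rw [Set.diff_eq_empty.mpr hUsub]; exact measure_empty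
  have step1 : sig X 0 1 I * sig X 0 1 J = ∫ z in Sp ×ˢ Sq, F z := by
    rw [show (∫ z in Sp ×ˢ Sq, F z) = ∫ z in Sp ×ˢ Sq, F z ∂(volume : Measure _) from rfl,
      Measure.volume_eq_prod, ← Measure.prod_restrict]
    exact (integral_prod_mul (μ := volume.restrict Sp) (ν := volume.restrict Sq)
      (fun s => ∏ i, deriv (fun u => X u (I i)) (s i))
      (fun u => ∏ j, deriv (fun v => X v (J j)) (u j))).symm
  have step2 : (∫ z in Sp ×ˢ Sq, F z) = ∫ z in U, F z :=
    setIntegral_congr_set haeeq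
  have hUb : U = ⋃ A ∈ (Finset.univ : Finset {A : Finset (Fin (p + q)) // A.card = p}),
      psi A.1 A.2 '' S := by
    rw [hU]; simp
  have step3 : (∫ z in U, F z) =
      ∑ A : {A : Finset (Fin (p + q)) // A.card = p}, ∫ z in psi A.1 A.2 '' S, F z := by
    rw [hUb]
    exact integral_biUnion_finset Finset.univ
      (fun A _ => (psi_measurableEmbedding A.1 A.2).measurableSet_image'
        (orderedSimplex_isOpen 0 1 (p + q)).measurableSet)
      (fun A _ B _ hAB => psi_image_disjoint (fun h => hAB (Subtype.ext h)))
      (fun A _ => hFint.mono_set (psi_image_subset A.1 A.2))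
  have step4 : ∀ A : {A : Finset (Fin (p + q)) // A.card = p},
      (∫ z in psi A.1 A.2 '' S, F z) = sig X 0 1 (interleave I J A.1 A.2) := by
    intro A
    rw [(psi_measurePreserving A.1 A.2).setIntegral_image_emb
      (psi_measurableEmbedding A.1 A.2) F S]
    refine setIntegral_congr_fun (orderedSimplex_isOpen 0 1 (p + q)).measurableSet ?_
    intro t _
    exact prod_split X I J A.1 A.2 t
  rw [step1, step2, step3]
  exact Finset.sum_congr rfl fun A _ => step4 A
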